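/- For γ = 2 and any operator F satisfying the uniform ellipticity, rotation invariance and positive 1-homogeneity assumptions, the radial principal eigenvalue satisfies Λ·(Ñ₊−2)²/4 ≤ λ̄'_2(F) ≤ λ·(Ñ₋−2)²/4. -/

import Mathlib

open Set Real Filter MeasureTheory Matrix

noncomputable section

/-- The `N × N` diagonal matrix with first diagonal entry `a` and the remaining
`N - 1` diagonal entries equal to `b`. -/
def Dmat (N : ℕ) (a b : ℝ) : Matrix (Fin N) (Fin N) ℝ :=
  Matrix.diagonal (fun i => if (i : ℕ) = 0 then a else b)

/-- Uniform ellipticity with constants `0 < lam ≤ Lam`. -/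
def UnifElliptic (N : ℕ) (lam Lam : ℝ) (F : Matrix (Fin N) (Fin N) ℝ → ℝ) : Prop :=
  ∀ M P : Matrix (Fin N) (Fin N) ℝ, M.IsSymm → P.PosSemidef →
    lam * P.trace ≤ F (M + P) - F M ∧ F (M + P) - F M ≤ Lam * P.trace

/-- Rotation invariance. -/
def RotInvariant (N : ℕ) (F : Matrix (Fin N) (Fin N) ℝ → ℝ) : Prop :=
  ∀ O M : Matrix (Fin N) (Fin N) ℝ, Oᵀ * O = 1 → F (Oᵀ * M * O) = F M

/-- Positive one-homogeneity. -/
def PosHomog (N : ℕ) (F : Matrix (Fin N) (Fin N) ℝ → ℝ) : Prop :=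
  ∀ t : ℝ, 0 < t → ∀ M : Matrix (Fin N) (Fin N) ℝ, F (t • M) = t * F M

/-- The radial principal eigenvalue `λ̄'_γ(F)` on the punctured unit ball. -/
def radialEV (N : ℕ) (F : Matrix (Fin N) (Fin N) ℝ → ℝ) (γ : ℝ) : ℝ :=
  sSup {μ : ℝ | ∃ u : ℝ → ℝ, ContDiffOn ℝ 2 u (Ioo 0 1) ∧
    (∀ r ∈ Ioo (0:ℝ) 1, 0 < u r) ∧
    (∀ r ∈ Ioo (0:ℝ) 1,
      F (Dmat N (deriv (deriv u) r) (deriv u r / r)) + μ * u r * r ^ (-γ) ≤ 0)}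


set_option maxHeartbeats 1000000

lemma Dmat_symm (N : ℕ) (a b : ℝ) : (Dmat N a b).IsSymm := Matrix.isSymm_diagonal _

lemma Dmat_psd (N : ℕ) {a b : ℝ} (ha : 0 ≤ a) (hb : 0 ≤ b) : (Dmat N a b).PosSemidef := by
  rw [Dmat, Matrix.posSemidef_diagonal_iff]
  intro i; split <;> assumption

lemma Dmat_trace (N : ℕ) (hN : 1 ≤ N) (a b : ℝ) :
    (Dmat N a b).trace = a + ((N : ℝ) - 1) * b := by
  haveI : NeZero N := ⟨by omega⟩
  rw [Dmat, Matrix.trace_diagonal]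
  have h1 : ∀ i : Fin N, (if (i : ℕ) = 0 then a else b) = b + (if i = (0 : Fin N) then a - b else 0) := by
    intro i
    rcases eq_or_ne i 0 with h | h
    · simp [h]
    · rw [if_neg h, if_neg (fun hc => h (Fin.ext (by simpa using hc)))]; ring
  rw [Finset.sum_congr rfl (fun i _ => h1 i), Finset.sum_add_distrib,
    Finset.sum_ite_eq' Finset.univ (0 : Fin N) (fun _ => a - b)]
  simp only [Finset.sum_const, Finset.card_univ, Fintype.card_fin, nsmul_eq_mul,
    Finset.mem_univ, if_true]
  ring

lemma Dmat_add (N : ℕ) (a b a' b' : ℝ) :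
    Dmat N a b + Dmat N a' b' = Dmat N (a + a') (b + b') := by
  have h : (fun i : Fin N => (if (i : ℕ) = 0 then a else b) + (if (i : ℕ) = 0 then a' else b'))
      = fun i : Fin N => if (i : ℕ) = 0 then a + a' else b + b' := by
    funext i; split <;> rfl
  rw [Dmat, Dmat, Dmat, Matrix.diagonal_add, h]

lemma Dmat_smul (N : ℕ) (c a b : ℝ) : c • Dmat N a b = Dmat N (c * a) (c * b) := by
  have h : (c • fun i : Fin N => if (i : ℕ) = 0 then a else b)
      = fun i : Fin N => if (i : ℕ) = 0 then c * a else c * b := by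
    funext i; simp only [Pi.smul_apply, smul_eq_mul]; split <;> rfl
  rw [Dmat, Dmat, ← Matrix.diagonal_smul, h]

section
variable {N : ℕ} {lam Lam : ℝ} {F : Matrix (Fin N) (Fin N) ℝ → ℝ}

lemma F_zero (hF3 : PosHomog N F) : F 0 = 0 := by
  have := hF3 2 (by norm_num) 0
  rw [smul_zero] at this
  linarith

lemma min_mul_eq (h : lam ≤ Lam) (a : ℝ) :
    min (lam * a) (Lam * a) = lam * max a 0 - Lam * max (-a) 0 := by
  rcases le_total a 0 with h0 | h0
  · rw [min_eq_right (by nlinarith), max_eq_right h0, max_eq_left (by linarith)]; ring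
  · rw [min_eq_left (by nlinarith), max_eq_left h0, max_eq_right (by linarith)]; ring

lemma pucci_upper (hN : 1 ≤ N) (hlam : 0 < lam) (hlL : lam ≤ Lam)
    (hF1 : UnifElliptic N lam Lam F) (hF3 : PosHomog N F)
    {a b : ℝ} (ha : 0 ≤ a) (hb : b ≤ 0) :
    F (Dmat N a b) ≤ Lam * a + lam * ((N : ℝ) - 1) * b := by
  have e1 := (hF1 (Dmat N a b) (Dmat N 0 (-b)) (Dmat_symm N a b)
    (Dmat_psd N le_rfl (by linarith))).1
  have e2 := (hF1 0 (Dmat N a 0) (Matrix.isSymm_zero) (Dmat_psd N ha le_rfl)).2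
  rw [Dmat_add, Dmat_trace N hN] at e1
  rw [zero_add, Dmat_trace N hN, F_zero hF3] at e2
  rw [show a + 0 = a from by ring, show b + -b = 0 from by ring] at e1
  linarith

end
section
variable {N : ℕ} {lam Lam : ℝ} {F : Matrix (Fin N) (Fin N) ℝ → ℝ}

lemma pucci_lower (hN : 1 ≤ N) (hlL : lam ≤ Lam)
    (hF1 : UnifElliptic N lam Lam F) (hF3 : PosHomog N F) (a b : ℝ) :
    min (lam * a) (Lam * a) + ((N : ℝ) - 1) * min (lam * b) (Lam * b) ≤ F (Dmat N a b) := by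
  set ap := max a 0 with hap
  set an := max (-a) 0 with han
  set bp := max b 0 with hbp
  set bn := max (-b) 0 with hbn
  have hap0 : 0 ≤ ap := le_max_right _ _
  have han0 : 0 ≤ an := le_max_right _ _
  have hbp0 : 0 ≤ bp := le_max_right _ _
  have hbn0 : 0 ≤ bn := le_max_right _ _
  have haa : a = ap - an := by
    rcases le_total a 0 with h|h
    · rw [hap, han, max_eq_right h, max_eq_left (by linarith : (0:ℝ) ≤ -a)]; ring
    · rw [hap, han, max_eq_left h, max_eq_right (by linarith : -a ≤ (0:ℝ))]; ring
  have hbb : b = bp - bn := by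
    rcases le_total b 0 with h|h
    · rw [hbp, hbn, max_eq_right h, max_eq_left (by linarith : (0:ℝ) ≤ -b)]; ring
    · rw [hbp, hbn, max_eq_left h, max_eq_right (by linarith : -b ≤ (0:ℝ))]; ring
  have e1 := (hF1 (Dmat N (-an) (-bn)) (Dmat N ap bp) (Dmat_symm N _ _)
    (Dmat_psd N hap0 hbp0)).1
  have e2 := (hF1 (Dmat N (-an) (-bn)) (Dmat N an bn) (Dmat_symm N _ _)
    (Dmat_psd N han0 hbn0)).2
  rw [Dmat_add, Dmat_trace N hN] at e1
  rw [Dmat_add, Dmat_trace N hN] at e2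
  rw [show -an + ap = a from by rw [haa]; ring, show -bn + bp = b from by rw [hbb]; ring] at e1
  rw [show -an + an = 0 from by ring, show -bn + bn = 0 from by ring] at e2
  have h00 : Dmat N 0 0 = 0 := by
    rw [show (0:ℝ) = (0:ℝ) * 0 from by ring, ← Dmat_smul, zero_smul]
  rw [h00, F_zero hF3] at e2
  rw [min_mul_eq hlL a, min_mul_eq hlL b]
  have hN1 : (0:ℝ) ≤ (N:ℝ) - 1 := by
    have : (1:ℝ) ≤ (N:ℝ) := by exact_mod_cast hN
    linarith
  nlinarith [mul_le_mul_of_nonneg_left hlL (mul_nonneg hN1 hbn0)]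
end
section
variable {N : ℕ} {lam Lam : ℝ} {F : Matrix (Fin N) (Fin N) ℝ → ℝ}

lemma witness_mem (hN : 2 ≤ N) (hlam : 0 < lam) (hlL : lam ≤ Lam)
    {Np : ℝ} (hNpdef : Np = lam / Lam * ((N : ℝ) - 1) + 1) (hNp : 2 < Np)
    (hF1 : UnifElliptic N lam Lam F) (hF3 : PosHomog N F) :
    ∃ u : ℝ → ℝ, ContDiffOn ℝ 2 u (Ioo 0 1) ∧
    (∀ r ∈ Ioo (0:ℝ) 1, 0 < u r) ∧
    (∀ r ∈ Ioo (0:ℝ) 1,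
      F (Dmat N (deriv (deriv u) r) (deriv u r / r))
        + (Lam * (Np - 2) ^ 2 / 4) * u r * r ^ (-(2:ℝ)) ≤ 0) := by
  have hLam : 0 < Lam := lt_of_lt_of_le hlam hlL
  obtain ⟨β, hβ0, hβeq⟩ : ∃ β : ℝ, 0 < β ∧ Np = 2 * β + 2 :=
    ⟨(Np - 2) / 2, by linarith, by ring⟩
  refine ⟨fun r => r ^ (-β), ?_, ?_, ?_⟩
  · intro x hx
    exact (Real.contDiffAt_rpow_const_of_ne (ne_of_gt hx.1)).contDiffWithinAt
  · intro r hr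
    exact Real.rpow_pos_of_pos hr.1 _
  · intro r hr
    have hr0 : (0:ℝ) < r := hr.1
    have hd1 : ∀ x : ℝ, 0 < x → deriv (fun y : ℝ => y ^ (-β)) x = -β * x ^ (-β - 1) := by
      intro x hx
      exact (Real.hasDerivAt_rpow_const (Or.inl (ne_of_gt hx))).deriv
    have hev : (deriv fun y : ℝ => y ^ (-β)) =ᶠ[nhds r] fun x => -β * x ^ (-β - 1) := by
      filter_upwards [Ioi_mem_nhds hr0] with x hx
      exact hd1 x hx
    have hd2 : deriv (deriv fun y : ℝ => y ^ (-β)) r = -β * ((-β - 1) * r ^ (-β - 2)) := by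
      have h3 := ((Real.hasDerivAt_rpow_const (p := -β - 1)
        (Or.inl (ne_of_gt hr0))).const_mul (-β)).deriv
      rw [show -β - 1 - 1 = -β - 2 from by ring] at h3
      rw [hev.deriv_eq, h3]
    rw [hd2, hd1 r hr0]
    have hsplit : r ^ (-β - 1) = r ^ (-β - 2) * r := by
      rw [show -β - 1 = (-β - 2) + 1 from by ring, Real.rpow_add_one (ne_of_gt hr0)]
    have hb : -β * r ^ (-β - 1) / r = r ^ (-β - 2) * (-β) := by
      rw [hsplit]; field_simp
    have ha : -β * ((-β - 1) * r ^ (-β - 2)) = r ^ (-β - 2) * (-β * (-β - 1)) := by ring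
    rw [ha, hb, ← Dmat_smul, hF3 _ (Real.rpow_pos_of_pos hr0 _)]
    have hrp : r ^ (-β) * r ^ (-(2:ℝ)) = r ^ (-β - 2) := by
      rw [← Real.rpow_add hr0]
      exact congrArg (fun z => r ^ z) (by ring)
    have key : F (Dmat N (-β * (-β - 1)) (-β)) + Lam * (Np - 2) ^ 2 / 4 ≤ 0 := by
      have hup := pucci_upper (by omega) hlam hlL hF1 hF3
        (a := -β * (-β - 1)) (b := -β) (by nlinarith) (by linarith)
      have hlamN : lam * ((N : ℝ) - 1) = Lam * (Np - 1) := by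
        rw [hNpdef]; field_simp; ring
      have hupper : Lam * (-β * (-β - 1)) + lam * ((N : ℝ) - 1) * (-β)
          = -(Lam * (Np - 2) ^ 2 / 4) := by rw [hlamN, hβeq]; ring
      linarith
    have hpos := Real.rpow_pos_of_pos hr0 (-β - 2)
    calc r ^ (-β - 2) * F (Dmat N (-β * (-β - 1)) (-β))
          + Lam * (Np - 2) ^ 2 / 4 * r ^ (-β) * r ^ (-(2:ℝ))
        = r ^ (-β - 2) * (F (Dmat N (-β * (-β - 1)) (-β)) + Lam * (Np - 2) ^ 2 / 4) := by
          rw [mul_assoc, hrp]; ring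
      _ ≤ 0 := mul_nonpos_of_nonneg_of_nonpos (le_of_lt hpos) key
end

set_option maxHeartbeats 1000000

lemma riccati_pointwise {lam Lam n Np Nm mu hh G eps : ℝ}
    (hlam : 0 < lam) (hlL : lam ≤ Lam) (hn : 2 ≤ n)
    (hNp1 : lam * (n - 1) = Lam * (Np - 1)) (hNp : 2 < Np)
    (hNm1 : Lam * (n - 1) = lam * (Nm - 1))
    (hmu : lam * (Nm - 2) ^ 2 / 4 < mu)
    (hepspos : 0 < eps) (hepseq : Lam * eps = mu - lam * (Nm - 2) ^ 2 / 4)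
    (h1 : min (lam * hh) (Lam * hh) + (n - 1) * min (lam * G) (Lam * G) + mu ≤ 0) :
    hh + G - G ^ 2 + eps ≤ 0 ∧ (1 ≤ G → hh + G - G ^ 2 ≤ -G ^ 2) := by
  have hLam : 0 < Lam := lt_of_lt_of_le hlam hlL
  have hmu0nn : (0:ℝ) ≤ lam * (Nm - 2) ^ 2 / 4 := by positivity
  have hmupos : 0 < mu := lt_of_le_of_lt hmu0nn hmu
  have hNm2 : (0:ℝ) ≤ Nm - 2 := by nlinarith
  rcases le_or_gt 0 G with hG | hG
  · -- G ≥ 0 : min (lam G) (Lam G) = lam * G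
    rw [min_eq_left (by nlinarith : lam * G ≤ Lam * G)] at h1
    have hGnn : 0 ≤ (n - 1) * (lam * G) :=
      mul_nonneg (by linarith) (mul_nonneg hlam.le hG)
    have hhneg : hh < 0 := by
      by_contra h
      push_neg at h
      rw [min_eq_left (by nlinarith : lam * hh ≤ Lam * hh)] at h1
      have : 0 ≤ lam * hh := mul_nonneg hlam.le h
      linarith
    rw [min_eq_right (by nlinarith : Lam * hh ≤ lam * hh)] at h1
    -- h1 : Lam * hh + (n-1) * (lam * G) + mu ≤ 0
    have h2 : (n - 1) * (lam * G) = Lam * ((Np - 1) * G) := by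
      linear_combination G * hNp1
    have hNpG : 0 ≤ Lam * ((Np - 2) * G) :=
      mul_nonneg hLam.le (mul_nonneg (by linarith) hG)
    constructor
    · have key : Lam * (hh + G - G ^ 2 + eps) ≤ 0 := by
        nlinarith [mul_nonneg hLam.le (sq_nonneg G)]
      by_contra h
      push_neg at h
      nlinarith [mul_pos hLam h]
    · intro h1G
      have key : Lam * (hh + G) ≤ 0 := by nlinarith
      have : hh + G ≤ 0 := by
        by_contra h
        push_neg at h
        nlinarith [mul_pos hLam h]
      linarith
  · -- G < 0 : min (lam G) (Lam G) = Lam * G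
    rw [min_eq_right (by nlinarith : Lam * G ≤ lam * G)] at h1
    refine ⟨?_, fun h1G => absurd h1G (by linarith)⟩
    rcases le_or_gt 0 hh with hhh | hhh
    · rw [min_eq_left (by nlinarith : lam * hh ≤ Lam * hh)] at h1
      -- h1 : lam * hh + (n-1) * (Lam * G) + mu ≤ 0
      have h2 : (n - 1) * (Lam * G) = lam * ((Nm - 1) * G) := by
        linear_combination G * hNm1
      have key : lam * (hh + G - G ^ 2 + eps) ≤ 0 := by
        linarith [mul_nonneg hlam.le (sq_nonneg (G + (Nm - 2) / 2)),
          mul_nonneg hepspos.le (by linarith : (0:ℝ) ≤ Lam - lam)]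
      by_contra h
      push_neg at h
      nlinarith [mul_pos hlam h]
    · rw [min_eq_right (by nlinarith : Lam * hh ≤ lam * hh)] at h1
      -- h1 : Lam * hh + (n-1) * (Lam * G) + mu ≤ 0
      have hsq : (lam * (Nm - 2)) ^ 2 = (Lam * (n - 1) - lam) ^ 2 := by
        rw [show lam * (Nm - 2) = Lam * (n - 1) - lam from by linarith]
      have hid : (0:ℝ) ≤ (Lam - lam) * (Lam * (n - 1) ^ 2 - lam) := by
        apply mul_nonneg (by linarith)
        linarith [mul_nonneg hLam.le (sq_nonneg (n - 2)),
          mul_le_mul_of_nonneg_left hn hLam.le]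
      have hepseq2 : lam * (Lam * eps) = lam * mu - lam * (lam * (Nm - 2) ^ 2 / 4) := by
        linear_combination lam * hepseq
      have key : lam * (Lam * (hh + G - G ^ 2 + eps)) ≤ 0 := by
        linarith [mul_le_mul_of_nonneg_left h1 hlam.le,
          mul_nonneg (mul_nonneg hlam.le hLam.le) (sq_nonneg (G + (n - 2) / 2)),
          hepseq2, hsq, hid]
      by_contra h
      push_neg at h
      nlinarith [mul_pos hlam (mul_pos hLam h)]


lemma no_supersol {eps : ℝ} (heps : 0 < eps) (g : ℝ → ℝ)
    (hdiff : ∀ r ∈ Ioo (0:ℝ) 1, DifferentiableAt ℝ g r)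
    (hric : ∀ r ∈ Ioo (0:ℝ) 1,
      r * deriv g r ≤ -eps ∧ (1 ≤ g r → r * deriv g r ≤ -(g r) ^ 2)) : False := by
  set W : ℝ → ℝ := fun r => g r + eps * Real.log r with hW
  have hWd : ∀ r ∈ Ioo (0:ℝ) 1, HasDerivAt W (deriv g r + eps * r⁻¹) r := by
    intro r hr
    exact ((hdiff r hr).hasDerivAt).add ((Real.hasDerivAt_log (ne_of_gt hr.1)).const_mul eps)
  have hant : AntitoneOn W (Ioo (0:ℝ) 1) := by
    apply antitoneOn_of_deriv_nonpos (convex_Ioo 0 1)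
    · intro r hr
      exact ((hWd r hr).differentiableAt).continuousAt.continuousWithinAt
    · intro r hr
      rw [interior_Ioo] at hr
      exact ((hWd r hr).differentiableAt).differentiableWithinAt
    · intro r hr
      rw [interior_Ioo] at hr
      rw [(hWd r hr).deriv]
      have h1 := (hric r hr).1
      have hr0 : 0 < r := hr.1
      have : deriv g r ≤ -eps / r := by
        rw [le_div_iff₀ hr0]
        linarith [h1]
      have h2 : -eps / r + eps * r⁻¹ = 0 := by field_simp; ring
      linarith [this]
  -- choose r0
  set c : ℝ := (W (1/2) - 1) / eps with hc
  set r0 : ℝ := min (1/2) (Real.exp c) with hr0def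
  have hr0pos : 0 < r0 := lt_min (by norm_num) (Real.exp_pos c)
  have hr0half : r0 ≤ 1/2 := min_le_left _ _
  have hhalfmem : (1/2 : ℝ) ∈ Ioo (0:ℝ) 1 := by norm_num
  have hG1 : ∀ r : ℝ, 0 < r → r ≤ r0 → 1 ≤ g r := by
    intro r hrpos hrle
    have hrmem : r ∈ Ioo (0:ℝ) 1 := ⟨hrpos, by linarith [hr0half, hrle]⟩
    have hWle : W (1/2) ≤ W r := hant hrmem hhalfmem (by linarith)
    have hlog : Real.log r ≤ c := by
      rw [Real.log_le_iff_le_exp hrpos]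
      exact le_trans hrle (min_le_right _ _)
    have : g r = W r - eps * Real.log r := by rw [hW]; ring
    rw [this]
    have hm := mul_le_mul_of_nonneg_left hlog heps.le
    have hceq : eps * c = W (1/2) - 1 := by rw [hc]; field_simp
    linarith [hm, hceq, hWle]
  -- second stage
  set r1 : ℝ := r0 * Real.exp (-2) with hr1def
  have hr1pos : 0 < r1 := mul_pos hr0pos (Real.exp_pos _)
  have hr1lt : r1 < r0 := by
    have h2 : Real.exp (-2:ℝ) < 1 := Real.exp_lt_one_iff.mpr (by norm_num)
    nlinarith
  have hsub : Icc r1 r0 ⊆ Ioo (0:ℝ) 1 := by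
    intro x hx
    exact ⟨lt_of_lt_of_le hr1pos hx.1, by linarith [hx.2, hr0half]⟩
  have hgpos : ∀ x ∈ Icc r1 r0, 1 ≤ g x := by
    intro x hx
    exact hG1 x (lt_of_lt_of_le hr1pos hx.1) hx.2
  set V : ℝ → ℝ := fun r => (g r)⁻¹ - Real.log r with hV
  have hVd : ∀ x ∈ Icc r1 r0, HasDerivAt V (-(deriv g x) / (g x) ^ 2 - x⁻¹) x := by
    intro x hx
    have hxm := hsub hx
    have hgx : g x ≠ 0 := by linarith [hgpos x hx]
    exact (((hdiff x hxm).hasDerivAt).inv hgx).sub (Real.hasDerivAt_log (ne_of_gt hxm.1))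
  have hmono : MonotoneOn V (Icc r1 r0) := by
    apply monotoneOn_of_deriv_nonneg (convex_Icc r1 r0)
    · intro x hx
      exact ((hVd x hx).differentiableAt).continuousAt.continuousWithinAt
    · intro x hx
      rw [interior_Icc] at hx
      exact ((hVd x (Ioo_subset_Icc_self hx)).differentiableAt).differentiableWithinAt
    · intro x hx
      rw [interior_Icc] at hx
      have hx' := Ioo_subset_Icc_self hx
      rw [(hVd x hx').deriv]
      have hxm := hsub hx'
      have hg1 : 1 ≤ g x := hgpos x hx'
      have h2 := (hric x hxm).2 hg1
      have hx0 : 0 < x := hxm.1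
      have hg0 : 0 < g x := by linarith
      have heq : -(deriv g x) / (g x) ^ 2 - x⁻¹
          = (-(x * deriv g x) - (g x) ^ 2) / (x * (g x) ^ 2) := by
        field_simp
      rw [heq]
      apply div_nonneg (by linarith) (by positivity)
  have hfinal := hmono (left_mem_Icc.mpr hr1lt.le) (right_mem_Icc.mpr hr1lt.le) hr1lt.le
  -- V r1 ≤ V r0
  have hlog1 : Real.log r1 = Real.log r0 + (-2) := by
    rw [hr1def, Real.log_mul (ne_of_gt hr0pos) (ne_of_gt (Real.exp_pos _)), Real.log_exp]
  have hg0' : 1 ≤ g r0 := hgpos r0 (right_mem_Icc.mpr hr1lt.le)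
  have hg1' : 1 ≤ g r1 := hgpos r1 (left_mem_Icc.mpr hr1lt.le)
  have hinv0 : (g r0)⁻¹ ≤ 1 := by
    rw [inv_le_one_iff₀]; right; linarith
  have hinv1 : 0 < (g r1)⁻¹ := by positivity
  rw [hV] at hfinal
  simp only at hfinal
  rw [hlog1] at hfinal
  linarith


section
variable {N : ℕ} {lam Lam : ℝ} {F : Matrix (Fin N) (Fin N) ℝ → ℝ}

lemma upper_bd (hN : 2 ≤ N) (hlam : 0 < lam) (hlL : lam ≤ Lam)
    {Np Nm : ℝ} (hNpdef : Np = lam / Lam * ((N : ℝ) - 1) + 1)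
    (hNmdef : Nm = Lam / lam * ((N : ℝ) - 1) + 1) (hNp : 2 < Np)
    (hF1 : UnifElliptic N lam Lam F) (hF3 : PosHomog N F) {mu : ℝ}
    (hmem : ∃ u : ℝ → ℝ, ContDiffOn ℝ 2 u (Ioo 0 1) ∧
      (∀ r ∈ Ioo (0:ℝ) 1, 0 < u r) ∧
      (∀ r ∈ Ioo (0:ℝ) 1,
        F (Dmat N (deriv (deriv u) r) (deriv u r / r)) + mu * u r * r ^ (-(2:ℝ)) ≤ 0)) :
    mu ≤ lam * (Nm - 2) ^ 2 / 4 := by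
  by_contra hcon'
  push_neg at hcon'
  obtain ⟨u, hu2, hupos, hpde⟩ := hmem
  have hLam : 0 < Lam := lt_of_lt_of_le hlam hlL
  have hn : (2:ℝ) ≤ (N : ℝ) := by exact_mod_cast hN
  have hNp1 : lam * ((N:ℝ) - 1) = Lam * (Np - 1) := by rw [hNpdef]; field_simp; ring
  have hNm1 : Lam * ((N:ℝ) - 1) = lam * (Nm - 1) := by rw [hNmdef]; field_simp; ring
  obtain ⟨eps, hepspos, hepseq⟩ : ∃ e : ℝ, 0 < e ∧ Lam * e = mu - lam * (Nm - 2) ^ 2 / 4 :=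
    ⟨(mu - lam * (Nm - 2) ^ 2 / 4) / Lam, div_pos (by linarith) hLam, by field_simp⟩
  set g : ℝ → ℝ := fun r => r * deriv u r / u r with hgdef
  have hdu : ContDiffOn ℝ 1 (deriv u) (Ioo (0:ℝ) 1) :=
    hu2.deriv_of_isOpen isOpen_Ioo (by norm_num)
  have hu_d : ∀ r ∈ Ioo (0:ℝ) 1, DifferentiableAt ℝ u r := fun r hr =>
    (hu2.contDiffAt (Ioo_mem_nhds hr.1 hr.2)).differentiableAt (by norm_num)
  have hdu_d : ∀ r ∈ Ioo (0:ℝ) 1, DifferentiableAt ℝ (deriv u) r := fun r hr =>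
    (hdu.contDiffAt (Ioo_mem_nhds hr.1 hr.2)).differentiableAt (by norm_num)
  have hgd : ∀ r ∈ Ioo (0:ℝ) 1, HasDerivAt g
      (((1 * deriv u r + r * deriv (deriv u) r) * u r - (r * deriv u r) * deriv u r)
        / (u r) ^ 2) r := by
    intro r hr
    exact ((hasDerivAt_id r).mul (hdu_d r hr).hasDerivAt).div (hu_d r hr).hasDerivAt
      (ne_of_gt (hupos r hr))
  apply no_supersol hepspos g (fun r hr => (hgd r hr).differentiableAt)
  intro r hr
  have hr0 : (0:ℝ) < r := hr.1
  have hur : 0 < u r := hupos r hr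
  have hune : u r ≠ 0 := ne_of_gt hur
  set a : ℝ := deriv (deriv u) r with hadef
  set b : ℝ := deriv u r / r with hbdef
  set hh : ℝ := r ^ 2 * a / u r with hhdef
  set c : ℝ := r ^ 2 / u r with hcdef
  have hc : 0 < c := by positivity
  have hkey : r * deriv g r = hh + g r - (g r) ^ 2 := by
    rw [(hgd r hr).deriv, hgdef, hhdef]
    field_simp
    ring
  have hr2 : (r ^ 2 : ℝ) * r ^ (-(2:ℝ)) = 1 := by
    rw [show ((r ^ 2 : ℝ)) = r ^ ((2:ℕ) : ℝ) from (Real.rpow_natCast r 2).symm,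
      ← Real.rpow_add hr0]
    norm_num
  have hca : c * a = hh := by rw [hcdef, hhdef]; ring
  have hcb : c * b = g r := by
    rw [hcdef, hbdef, hgdef]
    field_simp
  have e1 : c * min (lam * a) (Lam * a) = min (lam * hh) (Lam * hh) := by
    rw [mul_min_of_nonneg _ _ hc.le, show c * (lam * a) = lam * (c * a) from by ring,
      show c * (Lam * a) = Lam * (c * a) from by ring, hca]
  have e2 : c * min (lam * b) (Lam * b) = min (lam * g r) (Lam * g r) := by
    rw [mul_min_of_nonneg _ _ hc.le, show c * (lam * b) = lam * (c * b) from by ring,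
      show c * (Lam * b) = Lam * (c * b) from by ring, hcb]
  have e3 : c * (mu * u r * r ^ (-(2:ℝ))) = mu := by
    calc c * (mu * u r * r ^ (-(2:ℝ)))
        = mu * (r ^ 2 * r ^ (-(2:ℝ))) * (u r / u r) := by rw [hcdef]; ring
      _ = mu := by rw [div_self hune, hr2]; ring
  have hPL := pucci_lower (by omega) hlL hF1 hF3 a b
  have hPDE := hpde r hr
  have step : min (lam * a) (Lam * a) + ((N:ℝ) - 1) * min (lam * b) (Lam * b)
      ≤ -(mu * u r * r ^ (-(2:ℝ))) := by linarith
  have hmin : min (lam * hh) (Lam * hh) + ((N:ℝ) - 1) * min (lam * g r) (Lam * g r)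
      + mu ≤ 0 := by
    have hscaled := mul_le_mul_of_nonneg_left step hc.le
    have lhs_eq : c * (min (lam * a) (Lam * a) + ((N:ℝ) - 1) * min (lam * b) (Lam * b))
        = min (lam * hh) (Lam * hh) + ((N:ℝ) - 1) * min (lam * g r) (Lam * g r) := by
      rw [← e1, ← e2]; ring
    have rhs_eq : c * -(mu * u r * r ^ (-(2:ℝ))) = -mu := by
      rw [show c * -(mu * u r * r ^ (-(2:ℝ))) = -(c * (mu * u r * r ^ (-(2:ℝ)))) from by ring,
        e3]
    rw [lhs_eq, rhs_eq] at hscaled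
    linarith
  obtain ⟨hA, hB⟩ := riccati_pointwise hlam hlL hn hNp1 hNp hNm1 hcon' hepspos hepseq hmin
  constructor
  · rw [hkey]; linarith
  · intro h1g
    rw [hkey]
    exact hB h1g

end

theorem stmt4 (N : ℕ) (hN : 2 ≤ N) (lam Lam : ℝ) (hlam : 0 < lam) (hlL : lam ≤ Lam)
    (Np Nm : ℝ) (hNpdef : Np = lam / Lam * ((N : ℝ) - 1) + 1)
    (hNmdef : Nm = Lam / lam * ((N : ℝ) - 1) + 1) (hNp : 2 < Np)
    (F : Matrix (Fin N) (Fin N) ℝ → ℝ)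
    (hF1 : UnifElliptic N lam Lam F) (hF2 : RotInvariant N F) (hF3 : PosHomog N F) :
    Lam * (Np - 2) ^ 2 / 4 ≤ radialEV N F 2 ∧
    radialEV N F 2 ≤ lam * (Nm - 2) ^ 2 / 4 := by
  rw [radialEV]
  set S : Set ℝ := {μ : ℝ | ∃ u : ℝ → ℝ, ContDiffOn ℝ 2 u (Ioo 0 1) ∧
    (∀ r ∈ Ioo (0:ℝ) 1, 0 < u r) ∧
    (∀ r ∈ Ioo (0:ℝ) 1,
      F (Dmat N (deriv (deriv u) r) (deriv u r / r)) + μ * u r * r ^ (-(2:ℝ)) ≤ 0)} with hS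
  have hub : ∀ μ ∈ S, μ ≤ lam * (Nm - 2) ^ 2 / 4 := by
    intro μ hμ
    exact upper_bd hN hlam hlL hNpdef hNmdef hNp hF1 hF3 hμ
  have hw : Lam * (Np - 2) ^ 2 / 4 ∈ S :=
    witness_mem hN hlam hlL hNpdef hNp hF1 hF3
  constructor
  · exact le_csSup ⟨lam * (Nm - 2) ^ 2 / 4, fun μ hμ => hub μ hμ⟩ hw
  · exact csSup_le ⟨_, hw⟩ hub

end
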